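/- Let X ∈ ℝ^{V×D} have strictly positive entries, let W^{(n)} ∈ ℝ^{V×K} have strictly positive entries with every column in Δ_{V−1}, and let H^{(n)} ∈ ℝ^{K×D} have strictly positive entries. Define the joint multiplicative updates w^{(n+1)}_{vk} = (w^{(n)}_{vk} Σ_d x_{vd} h^{(n)}_{kd}/(W^{(n)}H^{(n)})_{vd}) / (Σ_{v′} w^{(n)}_{v′k} Σ_d x_{v′d} h^{(n)}_{kd}/(W^{(n)}H^{(n)})_{v′d}) and h^{(n+1)}_{kd} = h^{(n)}_{kd} Σ_v x_{vd} w^{(n)}_{vk}/(W^{(n)}H^{(n)})_{vd}. Then every column of W^{(n+1)} lies in Δ_{V−1}, all entries of W^{(n+1)} and H^{(n+1)} are strictly positive, and D_KL(X‖W^{(n+1)}H^{(n+1)}) ≤ D_KL(X‖W^{(n)}H^{(n)}). -/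

import Mathlib

lemma sub_le_mul_log_div' {t s : ℝ} (ht : 0 < t) (hs : 0 < s) :
    t - s ≤ t * Real.log (t / s) := by
  have h := Real.log_le_sub_one_of_pos (div_pos hs ht)
  have h2 : Real.log (t / s) = - Real.log (s / t) := by
    rw [← Real.log_inv, inv_div]
  rw [h2]
  have h3 : t * Real.log (s / t) ≤ t * (s / t - 1) := mul_le_mul_of_nonneg_left h ht.le
  have h4 : t * (s / t - 1) = s - t := by field_simp
  linarith

lemma jensen_log' {ι : Type*} [Fintype ι] (p z : ι → ℝ) (hp : ∀ i, 0 ≤ p i)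
    (hz : ∀ i, 0 < z i) (hs : ∑ i, p i = 1) :
    ∑ i, p i * Real.log (z i) ≤ Real.log (∑ i, p i * z i) := by
  have := (strictConcaveOn_log_Ioi.concaveOn).le_map_sum (t := Finset.univ)
    (w := p) (p := z) (fun i _ => hp i) hs (fun i _ => hz i)
  simpa [smul_eq_mul] using this



/-- Matrix product `(WH)_{vd} = ∑ k, w_{vk} h_{kd}`. -/
noncomputable def matMul {V K D : ℕ} (W : Fin V → Fin K → ℝ) (H : Fin K → Fin D → ℝ) :
    Fin V → Fin D → ℝ := fun v d => ∑ k, W v k * H k d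

/-- Generalized Kullback--Leibler divergence (real-valued; used here for strictly
positive matrices). -/
noncomputable def klDiv {V D : ℕ} (X Y : Fin V → Fin D → ℝ) : ℝ :=
  ∑ v, ∑ d, (X v d * Real.log (X v d / Y v d) - X v d + Y v d)

/-- One step of the joint multiplicative updates for NMF with an ℓ1 normalization
constraint on the columns of `W` (Algorithm 3): the updated `W` has simplex columns,
both updated matrices are strictly positive, and the KL objective does not increase. -/
theorem joint_mu_normalizedW_descent {V K D : ℕ} (hD : 0 < D)
    (X : Fin V → Fin D → ℝ) (hX : ∀ v d, 0 < X v d)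
    (W : Fin V → Fin K → ℝ) (H : Fin K → Fin D → ℝ)
    (hWpos : ∀ v k, 0 < W v k) (hWsum : ∀ k, (∑ v, W v k) = 1)
    (hHpos : ∀ k d, 0 < H k d) :
    let Wn : Fin V → Fin K → ℝ := fun v k =>
      (W v k * (∑ d, X v d * H k d / matMul W H v d)) /
        (∑ v', W v' k * (∑ d, X v' d * H k d / matMul W H v' d))
    let Hn : Fin K → Fin D → ℝ := fun k d =>
      H k d * (∑ v, X v d * W v k / matMul W H v d)
    ((∀ v k, 0 ≤ Wn v k) ∧ (∀ k, (∑ v, Wn v k) = 1)) ∧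
    (∀ v k, 0 < Wn v k) ∧ (∀ k d, 0 < Hn k d) ∧
    klDiv X (matMul Wn Hn) ≤ klDiv X (matMul W H) := by
  
  intro Wn Hn
  rcases Nat.eq_zero_or_pos K with hK | hK
  · subst hK
    exact ⟨⟨fun v k => k.elim0, fun k => k.elim0⟩, fun v k => k.elim0, fun k => k.elim0,
      le_of_eq (by simp [klDiv, matMul])⟩
  rcases Nat.eq_zero_or_pos V with hV | hV
  · exfalso
    subst hV
    simpa using hWsum ⟨0, hK⟩
  -- nonemptiness
  have hVne : (Finset.univ : Finset (Fin V)).Nonempty := ⟨⟨0, hV⟩, Finset.mem_univ _⟩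
  have hKne : (Finset.univ : Finset (Fin K)).Nonempty := ⟨⟨0, hK⟩, Finset.mem_univ _⟩
  have hDne : (Finset.univ : Finset (Fin D)).Nonempty := ⟨⟨0, hD⟩, Finset.mem_univ _⟩
  -- basic positivity
  have hApos : ∀ v d, 0 < matMul W H v d := fun v d =>
    Finset.sum_pos (fun k _ => mul_pos (hWpos v k) (hHpos k d)) hKne
  set A : Fin V → Fin D → ℝ := matMul W H with hAdef
  have hspos : ∀ v k, 0 < ∑ d, X v d * H k d / A v d := fun v k =>
    Finset.sum_pos (fun d _ => div_pos (mul_pos (hX v d) (hHpos k d)) (hApos v d)) hDne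
  set c : Fin V → Fin K → ℝ := fun v k => W v k * (∑ d, X v d * H k d / A v d) with hcdef
  have hcpos : ∀ v k, 0 < c v k := fun v k => mul_pos (hWpos v k) (hspos v k)
  set Ck : Fin K → ℝ := fun k => ∑ v', c v' k with hCdef
  have hCpos : ∀ k, 0 < Ck k := fun k => Finset.sum_pos (fun v _ => hcpos v k) hVne
  have hWnEq : ∀ v k, Wn v k = c v k / Ck k := fun v k => rfl
  set r : Fin K → Fin D → ℝ := fun k d => ∑ v, X v d * W v k / A v d with hrdef
  have hrpos : ∀ k d, 0 < r k d := fun k d =>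
    Finset.sum_pos (fun v _ => div_pos (mul_pos (hX v d) (hWpos v k)) (hApos v d)) hVne
  have hHnEq : ∀ k d, Hn k d = H k d * r k d := fun k d => rfl
  have hWnpos : ∀ v k, 0 < Wn v k := fun v k =>
    (hWnEq v k) ▸ div_pos (hcpos v k) (hCpos k)
  have hHnpos : ∀ k d, 0 < Hn k d := fun k d =>
    (hHnEq k d) ▸ mul_pos (hHpos k d) (hrpos k d)
  have hWnsum : ∀ k, ∑ v, Wn v k = 1 := by
    intro k
    simp only [hWnEq]
    rw [← Finset.sum_div]
    exact div_self (hCpos k).ne'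
  refine ⟨⟨fun v k => (hWnpos v k).le, hWnsum⟩, hWnpos, hHnpos, ?_⟩
  -- descent
  set B : Fin V → Fin D → ℝ := matMul Wn Hn with hBdef
  have hBpos : ∀ v d, 0 < B v d := fun v d =>
    Finset.sum_pos (fun k _ => mul_pos (hWnpos v k) (hHnpos k d)) hKne
  -- Jensen pointwise bound
  have key : ∀ v d, X v d * Real.log (A v d / B v d) ≤
      - ∑ k, (X v d * (W v k * H k d / A v d)) *
        Real.log ((Wn v k * Hn k d) / (W v k * H k d)) := by
    intro v d
    have hp : ∀ k, 0 < W v k * H k d / A v d := fun k =>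
      div_pos (mul_pos (hWpos v k) (hHpos k d)) (hApos v d)
    have hpsum : ∑ k, W v k * H k d / A v d = 1 := by
      rw [← Finset.sum_div]
      exact div_self (hApos v d).ne'
    have hz : ∀ k, 0 < A v d * (Wn v k * Hn k d) / (W v k * H k d) := fun k =>
      div_pos (mul_pos (hApos v d) (mul_pos (hWnpos v k) (hHnpos k d)))
        (mul_pos (hWpos v k) (hHpos k d))
    have hJ := jensen_log' (fun k => W v k * H k d / A v d)
      (fun k => A v d * (Wn v k * Hn k d) / (W v k * H k d))
      (fun k => (hp k).le) hz hpsum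
    have hpz : ∀ k, (W v k * H k d / A v d) *
        (A v d * (Wn v k * Hn k d) / (W v k * H k d)) = Wn v k * Hn k d := by
      intro k
      have h1 := (hWpos v k).ne'
      have h2 := (hHpos k d).ne'
      have h3 := (hApos v d).ne'
      field_simp
    rw [Finset.sum_congr rfl (fun k _ => hpz k)] at hJ
    have hsumB : ∑ k, Wn v k * Hn k d = B v d := rfl
    rw [hsumB] at hJ
    have hlogz : ∀ k, Real.log (A v d * (Wn v k * Hn k d) / (W v k * H k d)) =
        Real.log (A v d) + Real.log ((Wn v k * Hn k d) / (W v k * H k d)) := by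
      intro k
      rw [mul_div_assoc, Real.log_mul (hApos v d).ne'
        (div_pos (mul_pos (hWnpos v k) (hHnpos k d)) (mul_pos (hWpos v k) (hHpos k d))).ne']
    rw [Finset.sum_congr rfl (fun k _ => by rw [hlogz k])] at hJ
    have hsplit : ∑ k, (W v k * H k d / A v d) *
        (Real.log (A v d) + Real.log ((Wn v k * Hn k d) / (W v k * H k d))) =
        Real.log (A v d) + ∑ k, (W v k * H k d / A v d) *
          Real.log ((Wn v k * Hn k d) / (W v k * H k d)) := by
      rw [Finset.sum_congr rfl (fun k _ => mul_add _ _ _), Finset.sum_add_distrib,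
        ← Finset.sum_mul, hpsum, one_mul]
    rw [hsplit] at hJ
    have hlogAB : Real.log (A v d / B v d) = Real.log (A v d) - Real.log (B v d) :=
      Real.log_div (hApos v d).ne' (hBpos v d).ne'
    have h1 : Real.log (A v d / B v d) ≤
        - ∑ k, (W v k * H k d / A v d) *
          Real.log ((Wn v k * Hn k d) / (W v k * H k d)) := by
      rw [hlogAB]; linarith
    calc X v d * Real.log (A v d / B v d)
        ≤ X v d * (- ∑ k, (W v k * H k d / A v d) *
            Real.log ((Wn v k * Hn k d) / (W v k * H k d))) :=
          mul_le_mul_of_nonneg_left h1 (hX v d).le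
      _ = - ∑ k, (X v d * (W v k * H k d / A v d)) *
            Real.log ((Wn v k * Hn k d) / (W v k * H k d)) := by
          rw [mul_neg, Finset.mul_sum]
          congr 1
          exact Finset.sum_congr rfl fun k _ => by ring
  -- decompose klDiv difference
  have hkl : klDiv X B = klDiv X A +
      ∑ v, ∑ d, (X v d * Real.log (A v d / B v d) + (B v d - A v d)) := by
    rw [klDiv, klDiv, ← Finset.sum_add_distrib]
    refine Finset.sum_congr rfl fun v _ => ?_
    rw [← Finset.sum_add_distrib]
    refine Finset.sum_congr rfl fun d _ => ?_
    have hlog : Real.log (X v d / B v d) =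
        Real.log (X v d / A v d) + Real.log (A v d / B v d) := by
      rw [← Real.log_mul (div_pos (hX v d) (hApos v d)).ne'
        (div_pos (hApos v d) (hBpos v d)).ne']
      have h1 := (hApos v d).ne'
      have h2 := (hBpos v d).ne'
      congr 1
      field_simp
    rw [hlog]; ring
  rw [hkl]
  have hS : ∑ v, ∑ d, (X v d * Real.log (A v d / B v d) + (B v d - A v d)) ≤ 0 := by
    -- bound by -T + E
    have step1 : ∑ v, ∑ d, (X v d * Real.log (A v d / B v d) + (B v d - A v d)) ≤
        (∑ v, ∑ d, - ∑ k, (X v d * (W v k * H k d / A v d)) *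
          Real.log ((Wn v k * Hn k d) / (W v k * H k d))) +
        ∑ v, ∑ d, (B v d - A v d) := by
      rw [← Finset.sum_add_distrib]
      refine Finset.sum_le_sum fun v _ => ?_
      rw [← Finset.sum_add_distrib]
      exact Finset.sum_le_sum fun d _ => add_le_add_left (key v d) _
    -- T splits into T1 + T2
    have hLsplit : ∀ (v : Fin V) (d : Fin D) (k : Fin K),
        Real.log ((Wn v k * Hn k d) / (W v k * H k d)) =
        Real.log (Wn v k / W v k) + Real.log (Hn k d / H k d) := by
      intro v d k
      rw [← div_mul_div_comm, Real.log_mul (div_pos (hWnpos v k) (hWpos v k)).ne'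
        (div_pos (hHnpos k d) (hHpos k d)).ne']
    have swapVDK : ∀ (g : Fin V → Fin D → Fin K → ℝ),
        ∑ v, ∑ d, ∑ k, g v d k = ∑ k, ∑ v, ∑ d, g v d k := fun g => by
      rw [show (∑ v, ∑ d, ∑ k, g v d k) = ∑ v, ∑ k, ∑ d, g v d k from
        Finset.sum_congr rfl fun v _ => Finset.sum_comm, Finset.sum_comm]
    have hE : ∑ v, ∑ d, (B v d - A v d) = ∑ k, ∑ d, (Hn k d - H k d) := by
      have hB' : ∑ v, ∑ d, B v d = ∑ k, ∑ d, Hn k d := by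
        calc ∑ v, ∑ d, B v d = ∑ v, ∑ d, ∑ k, Wn v k * Hn k d := rfl
          _ = ∑ k, ∑ v, ∑ d, Wn v k * Hn k d := swapVDK _
          _ = ∑ k, ∑ d, ∑ v, Wn v k * Hn k d :=
              Finset.sum_congr rfl fun k _ => Finset.sum_comm
          _ = ∑ k, ∑ d, Hn k d := by
              refine Finset.sum_congr rfl fun k _ => Finset.sum_congr rfl fun d _ => ?_
              rw [← Finset.sum_mul, hWnsum k, one_mul]
      have hA' : ∑ v, ∑ d, A v d = ∑ k, ∑ d, H k d := by
        calc ∑ v, ∑ d, A v d = ∑ v, ∑ d, ∑ k, W v k * H k d := rfl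
          _ = ∑ k, ∑ v, ∑ d, W v k * H k d := swapVDK _
          _ = ∑ k, ∑ d, ∑ v, W v k * H k d :=
              Finset.sum_congr rfl fun k _ => Finset.sum_comm
          _ = ∑ k, ∑ d, H k d := by
              refine Finset.sum_congr rfl fun k _ => Finset.sum_congr rfl fun d _ => ?_
              rw [← Finset.sum_mul, hWsum k, one_mul]
      simp only [Finset.sum_sub_distrib]
      rw [hB', hA']
    have hT : ∑ v, ∑ d, ∑ k, (X v d * (W v k * H k d / A v d)) *
        Real.log ((Wn v k * Hn k d) / (W v k * H k d)) =
        (∑ k, ∑ v, c v k * Real.log (Wn v k / W v k)) +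
        (∑ k, ∑ d, Hn k d * Real.log (Hn k d / H k d)) := by
      have hsplit : ∑ v, ∑ d, ∑ k, (X v d * (W v k * H k d / A v d)) *
          Real.log ((Wn v k * Hn k d) / (W v k * H k d)) =
          (∑ v, ∑ d, ∑ k, (X v d * (W v k * H k d / A v d)) * Real.log (Wn v k / W v k)) +
          (∑ v, ∑ d, ∑ k, (X v d * (W v k * H k d / A v d)) * Real.log (Hn k d / H k d)) := by
        simp only [hLsplit, mul_add, Finset.sum_add_distrib]
      rw [hsplit]
      congr 1
      · rw [swapVDK]
        refine Finset.sum_congr rfl fun k _ => Finset.sum_congr rfl fun v _ => ?_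
        have hterm : ∀ d : Fin D, (X v d * (W v k * H k d / A v d)) * Real.log (Wn v k / W v k)
            = (X v d * H k d / A v d) * (W v k * Real.log (Wn v k / W v k)) := fun d => by ring
        rw [Finset.sum_congr rfl fun d _ => hterm d, ← Finset.sum_mul]
        simp only [hcdef]
        ring
      · rw [swapVDK]
        refine Finset.sum_congr rfl fun k _ => ?_
        rw [Finset.sum_comm]
        refine Finset.sum_congr rfl fun d _ => ?_
        have hterm : ∀ v : Fin V, (X v d * (W v k * H k d / A v d)) * Real.log (Hn k d / H k d)
            = (X v d * W v k / A v d) * (H k d * Real.log (Hn k d / H k d)) := fun v => by ring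
        rw [Finset.sum_congr rfl fun v _ => hterm v, ← Finset.sum_mul, hHnEq]
        simp only [hrdef]
        ring
    have hT1 : 0 ≤ ∑ k, ∑ v, c v k * Real.log (Wn v k / W v k) := by
      refine Finset.sum_nonneg fun k _ => ?_
      have h0 : ∑ v, (c v k - Ck k * W v k) = 0 := by
        rw [Finset.sum_sub_distrib, ← Finset.mul_sum, hWsum k, mul_one]
        exact sub_self _
      calc (0:ℝ) = ∑ v, (c v k - Ck k * W v k) := h0.symm
        _ ≤ ∑ v, c v k * Real.log (Wn v k / W v k) := by
            refine Finset.sum_le_sum fun v _ => ?_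
            have hb := sub_le_mul_log_div' (hcpos v k) (mul_pos (hCpos k) (hWpos v k))
            have heq : c v k / (Ck k * W v k) = Wn v k / W v k := by
              rw [hWnEq v k, div_div]
            rw [← heq]
            exact hb
    have hT2 : ∑ k, ∑ d, (Hn k d - H k d) ≤ ∑ k, ∑ d, Hn k d * Real.log (Hn k d / H k d) :=
      Finset.sum_le_sum fun k _ => Finset.sum_le_sum fun d _ =>
        sub_le_mul_log_div' (hHnpos k d) (hHpos k d)
    have hneg : ∑ v, ∑ d, (- ∑ k, (X v d * (W v k * H k d / A v d)) *
        Real.log ((Wn v k * Hn k d) / (W v k * H k d))) =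
        - ∑ v, ∑ d, ∑ k, (X v d * (W v k * H k d / A v d)) *
          Real.log ((Wn v k * Hn k d) / (W v k * H k d)) := by
      simp only [Finset.sum_neg_distrib]
    rw [hneg, hT, hE] at step1
    linarith
  linarith
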